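/- The family (i, j) ↦ |QNC(p_i, p_j)|, indexed by pairs of positive integers i, j, is summable; that is, ∑_{i=1}^∞ ∑_{j=1}^∞ |R_{ij}| < ∞, where R_{ij} = QNC(p_i, p_j). -/

import Mathlib

open Real

/-- `F(x,y) = ∑_{k=1}^∞ x^{k-1} · y^{-x^k} / (1 - y^{-x^k})²`. -/
noncomputable def F (x y : ℝ) : ℝ :=
  ∑' k : ℕ, x ^ (k : ℝ) * y ^ (-(x ^ ((k : ℝ) + 1))) / (1 - y ^ (-(x ^ ((k : ℝ) + 1)))) ^ 2

/-- `QNC(x,y) = (1/(12xy)) · ( x(y-1)F(x,y) - y(x-1)F(y,x) )`. -/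
noncomputable def QNC (x y : ℝ) : ℝ :=
  1 / (12 * x * y) * (x * (y - 1) * F x y - y * (x - 1) * F y x)

/-- `nthPrime i` is the `(i+1)`-st prime, so `nthPrime 0 = 2`, `nthPrime 1 = 3`, ... -/
noncomputable def nthPrime (i : ℕ) : ℕ := Nat.nth Nat.Prime i

lemma two_mul_le_two_pow {m : ℕ} (hm : 2 ≤ m) : 2 * m ≤ 2 ^ m := by
  induction m with
  | zero => omega
  | succ n ih =>
    rcases Nat.lt_or_ge n 2 with h | h
    · interval_cases n <;> norm_num
    · have h1 := ih h
      have h2 : 2 ≤ 2 ^ n := Nat.one_lt_two_pow (by omega)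
      have : 2 ^ (n+1) = 2 ^ n + 2 ^ n := by ring
      omega

lemma F_bounds (m n : ℕ) (hm : 2 ≤ m) (hn : 2 ≤ n) :
    0 ≤ F (m:ℝ) (n:ℝ) ∧ F (m:ℝ) (n:ℝ) ≤ 4 * (n:ℝ) ^ (-(m:ℝ)) := by
  set x := (m:ℝ) with hxd
  set y := (n:ℝ) with hyd
  have hx : (2:ℝ) ≤ x := by rw [hxd]; exact_mod_cast hm
  have hy : (2:ℝ) ≤ y := by rw [hyd]; exact_mod_cast hn
  have hx0 : (0:ℝ) < x := by linarith
  have hy0 : (0:ℝ) < y := by linarith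
  set s := y ^ (-x) with hs
  have hs0 : 0 < s := rpow_pos_of_pos hy0 _
  -- x*s ≤ 1/2
  have hxs : x * s ≤ 1/2 := by
    have h2x : (2:ℝ) ^ x ≤ y ^ x := rpow_le_rpow (by norm_num) hy hx0.le
    have hsle : s ≤ (2:ℝ) ^ (-x) := by
      rw [hs, rpow_neg hy0.le, rpow_neg (by norm_num : (0:ℝ) ≤ 2)]
      exact inv_anti₀ (rpow_pos_of_pos (by norm_num) x) h2x
    have h2m : ((2:ℝ)) ^ (-x) = ((2:ℝ) ^ m)⁻¹ := by
      rw [rpow_neg (by norm_num : (0:ℝ) ≤ 2), hxd, rpow_natCast]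
    have hmm : (2:ℝ) * m ≤ 2 ^ m := by exact_mod_cast two_mul_le_two_pow hm
    have hp : (0:ℝ) < 2 ^ m := by positivity
    have : x * ((2:ℝ)^m)⁻¹ ≤ 1/2 := by
      rw [mul_inv_le_iff₀ hp]
      rw [hxd]; nlinarith
    calc x * s ≤ x * (2:ℝ)^(-x) := by
          exact mul_le_mul_of_nonneg_left hsle hx0.le
      _ = x * ((2:ℝ)^m)⁻¹ := by rw [h2m]
      _ ≤ 1/2 := this
  -- term bounds
  have hterm : ∀ k : ℕ,
      0 ≤ x ^ (k:ℝ) * y ^ (-(x ^ ((k:ℝ)+1))) / (1 - y ^ (-(x ^ ((k:ℝ)+1)))) ^ 2 ∧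
      x ^ (k:ℝ) * y ^ (-(x ^ ((k:ℝ)+1))) / (1 - y ^ (-(x ^ ((k:ℝ)+1)))) ^ 2
        ≤ 2 * s * (1/2)^k := by
    intro k
    have e1 : x ^ ((k:ℝ)) = x ^ k := rpow_natCast x k
    have e2 : x ^ ((k:ℝ)+1) = x ^ (k+1) := by
      rw [show ((k:ℝ)+1) = ((k+1:ℕ):ℝ) by push_cast; ring, rpow_natCast]
    set u := y ^ (-(x ^ ((k:ℝ)+1))) with hu
    have hu0 : 0 < u := rpow_pos_of_pos hy0 _
    have hA2 : (2:ℝ) ≤ x ^ ((k:ℝ)+1) := by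
      rw [e2]
      calc (2:ℝ) = 2^1 := by norm_num
        _ ≤ 2^(k+1) := pow_le_pow_right₀ (by norm_num) (by omega)
        _ ≤ x^(k+1) := pow_le_pow_left₀ (by norm_num) hx _
    have hu4 : u ≤ 1/4 := by
      have h1 : u ≤ y ^ (-(2:ℝ)) :=
        rpow_le_rpow_of_exponent_le (by linarith) (by linarith)
      have h2 : y ^ (-(2:ℝ)) = (y^(2:ℕ))⁻¹ := by
        rw [rpow_neg hy0.le, show ((2:ℝ)) = ((2:ℕ):ℝ) by norm_num, rpow_natCast]
      have h3 : (y^(2:ℕ))⁻¹ ≤ 1/4 := by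
        rw [show (1/4 : ℝ) = ((4:ℝ))⁻¹ by norm_num]
        exact inv_anti₀ (by norm_num) (by nlinarith)
      linarith
    have hden : (1/2 : ℝ) ≤ (1 - u)^2 := by nlinarith
    have hden0 : (0:ℝ) < (1-u)^2 := by linarith
    constructor
    · apply div_nonneg _ hden0.le
      positivity
    -- main chain
    have hk1 : ((k:ℝ)+1) ≤ x ^ k := by
      have : (k+1 : ℕ) ≤ 2^k := Nat.lt_two_pow_self (n := k)
      have h2k : ((k:ℝ)+1) ≤ (2:ℝ)^k := by exact_mod_cast this
      calc ((k:ℝ)+1) ≤ (2:ℝ)^k := h2k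
        _ ≤ x^k := pow_le_pow_left₀ (by norm_num) hx _
    have hus : u ≤ s ^ (k+1) := by
      have hexp : x * ((k:ℝ)+1) ≤ x ^ ((k:ℝ)+1) := by
        rw [e2, pow_succ, mul_comm (x^k) x]
        exact mul_le_mul_of_nonneg_left hk1 hx0.le
      have h1 : u ≤ y ^ (-(x * ((k:ℝ)+1))) :=
        rpow_le_rpow_of_exponent_le (by linarith) (by linarith)
      have h2 : y ^ (-(x * ((k:ℝ)+1))) = s ^ (k+1) := by
        rw [show (-(x * ((k:ℝ)+1))) = (-x) * (((k+1:ℕ)):ℝ) by push_cast; ring,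
          rpow_mul hy0.le, rpow_natCast]
      linarith [h1, h2.le]
    calc x ^ (k:ℝ) * u / (1-u)^2 ≤ x^k * u * 2 := by
          rw [e1, div_le_iff₀ hden0]
          have : 0 ≤ x^k * u := by positivity
          nlinarith
      _ ≤ x^k * (s * s^k) * 2 := by
          have : s^(k+1) = s * s^k := by ring
          nlinarith [pow_nonneg hx0.le k, pow_nonneg hs0.le k]
      _ = 2 * s * (x*s)^k := by rw [mul_pow]; ring
      _ ≤ 2 * s * (1/2)^k := by
          have h1 : (x*s)^k ≤ (1/2)^k := pow_le_pow_left₀ (by positivity) hxs k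
          exact mul_le_mul_of_nonneg_left h1 (by positivity)
  have hmaj : Summable (fun k : ℕ => 2 * s * (1/2:ℝ)^k) :=
    (summable_geometric_two).mul_left _
  have hsum : Summable (fun k : ℕ =>
      x ^ (k:ℝ) * y ^ (-(x ^ ((k:ℝ)+1))) / (1 - y ^ (-(x ^ ((k:ℝ)+1)))) ^ 2) :=
    Summable.of_nonneg_of_le (fun k => (hterm k).1) (fun k => (hterm k).2) hmaj
  constructor
  · exact tsum_nonneg (fun k => (hterm k).1)
  · calc F x y ≤ ∑' k : ℕ, 2 * s * (1/2:ℝ)^k :=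
        Summable.tsum_le_tsum (fun k => (hterm k).2) hsum hmaj
      _ = 2 * s * 2 := by rw [tsum_mul_left, tsum_geometric_two]
      _ ≤ 4 * s := by linarith


lemma QNC_abs_le (m n : ℕ) (hm : 2 ≤ m) (hn : 2 ≤ n) :
    |QNC (m:ℝ) (n:ℝ)| ≤ (1/3) * ((n:ℝ) ^ (-(m:ℝ)) + (m:ℝ) ^ (-(n:ℝ))) := by
  obtain ⟨hF1, hF2⟩ := F_bounds m n hm hn
  obtain ⟨hG1, hG2⟩ := F_bounds n m hn hm
  have hx : (2:ℝ) ≤ (m:ℝ) := by exact_mod_cast hm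
  have hy : (2:ℝ) ≤ (n:ℝ) := by exact_mod_cast hn
  set x := (m:ℝ)
  set y := (n:ℝ)
  set s1 := y ^ (-x) with hs1
  set s2 := x ^ (-y) with hs2
  have hs1p : 0 < s1 := rpow_pos_of_pos (by linarith) _
  have hs2p : 0 < s2 := rpow_pos_of_pos (by linarith) _
  have hA : 0 ≤ x * (y-1) * F x y := by
    apply mul_nonneg (by nlinarith) hF1
  have hB : 0 ≤ y * (x-1) * F y x := by
    apply mul_nonneg (by nlinarith) hG1
  have hAle : x * (y-1) * F x y ≤ x * y * (4 * s1) := by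
    apply mul_le_mul (by nlinarith) hF2 hF1 (by nlinarith)
  have hBle : y * (x-1) * F y x ≤ y * x * (4 * s2) := by
    apply mul_le_mul (by nlinarith) hG2 hG1 (by nlinarith)
  rw [QNC, abs_mul]
  have h12 : |1 / (12 * x * y)| = 1 / (12 * x * y) := by
    rw [abs_of_pos]; positivity
  rw [h12]
  have habs : |x * (y-1) * F x y - y * (x-1) * F y x|
      ≤ x * y * (4 * s1) + y * x * (4 * s2) := by
    rw [abs_sub_le_iff]
    constructor <;> nlinarith
  calc 1 / (12 * x * y) * |x * (y-1) * F x y - y * (x-1) * F y x|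
      ≤ 1 / (12 * x * y) * (x * y * (4 * s1) + y * x * (4 * s2)) := by
        apply mul_le_mul_of_nonneg_left habs (by positivity)
    _ = (1/3) * (s1 + s2) := by
        field_simp
        ring

lemma nthPrime_two_le (i : ℕ) : 2 ≤ nthPrime i := (Nat.prime_nth_prime i).two_le

lemma nthPrime_ge (i : ℕ) : i + 2 ≤ nthPrime i := by
  induction i with
  | zero => exact nthPrime_two_le 0
  | succ n ih =>
    have h : Nat.nth Nat.Prime n < Nat.nth Nat.Prime (n+1) :=
      Nat.nth_strictMono Nat.infinite_setOf_prime (Nat.lt_succ_self n)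
    simp only [nthPrime] at ih ⊢
    omega

lemma rpow_prime_le (i j : ℕ) :
    ((nthPrime j : ℝ)) ^ (-(nthPrime i : ℝ)) ≤ (1/2:ℝ)^i * (1/((j:ℝ)+2)^2) := by
  set q := (nthPrime j : ℝ) with hqd
  have hq : ((j:ℝ)+2) ≤ q := by
    rw [hqd]; exact_mod_cast nthPrime_ge j
  have hq2 : (2:ℝ) ≤ q := by rw [hqd]; exact_mod_cast nthPrime_two_le j
  have hpi : ((i:ℝ)+2) ≤ (nthPrime i : ℝ) := by exact_mod_cast nthPrime_ge i
  have h1 : q ^ (-(nthPrime i:ℝ)) ≤ q ^ (-((i:ℝ)+2)) :=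
    rpow_le_rpow_of_exponent_le (by linarith) (by linarith)
  have h2 : q ^ (-((i:ℝ)+2)) = (q ^ (i+2 : ℕ))⁻¹ := by
    rw [rpow_neg (by linarith), show ((i:ℝ)+2) = ((i+2:ℕ):ℝ) by push_cast; ring,
      rpow_natCast]
  have h3 : ((j:ℝ)+2)^2 * 2^i ≤ q ^ (i+2) := by
    have e0 : q^(i+2) = q^2 * q^i := by ring
    have e1 : ((j:ℝ)+2)^2 ≤ q^2 := pow_le_pow_left₀ (by positivity) hq 2
    have e2 : (2:ℝ)^i ≤ q^i := pow_le_pow_left₀ (by norm_num) hq2 i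
    have p1 : (0:ℝ) < 2^i := by positivity
    nlinarith [sq_nonneg ((j:ℝ)+2)]
  have h4 : (q^(i+2:ℕ))⁻¹ ≤ (((j:ℝ)+2)^2 * 2^i)⁻¹ := inv_anti₀ (by positivity) h3
  have h5 : ((((j:ℝ)+2)^2 * 2^i)⁻¹ : ℝ) = (1/2:ℝ)^i * (1/((j:ℝ)+2)^2) := by
    have hjj : ((j:ℝ)+2) ≠ 0 := by positivity
    have h2i : ((2:ℝ))^i ≠ 0 := by positivity
    field_simp
    rw [← mul_pow]; norm_num
  calc q ^ (-(nthPrime i:ℝ)) ≤ q ^ (-((i:ℝ)+2)) := h1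
    _ = (q ^ (i+2:ℕ))⁻¹ := h2
    _ ≤ (((j:ℝ)+2)^2 * 2^i)⁻¹ := h4
    _ = (1/2:ℝ)^i * (1/((j:ℝ)+2)^2) := h5

set_option maxHeartbeats 1000000

/-- The family `(i, j) ↦ |QNC(p_i, p_j)|` over pairs of positive integers
(reindexed from `0`) is summable: `∑_i ∑_j |R_{ij}| < ∞`. -/
theorem summable_abs_R :
    Summable (fun ij : ℕ × ℕ =>
      |QNC (nthPrime ij.1 : ℝ) (nthPrime ij.2 : ℝ)|) := by
  have hc : Summable (fun j : ℕ => 1/((j:ℝ)+2)^2) := by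
    have h0 : Summable (fun n : ℕ => 1/(n:ℝ)^2) :=
      (Real.summable_one_div_nat_pow).mpr one_lt_two
    have h1 := (summable_nat_add_iff 2).mpr h0
    refine h1.congr fun j => ?_
    push_cast
    ring
  have h1sum : Summable (fun p : ℕ × ℕ => (1/2:ℝ)^p.1 * (1/((p.2:ℝ)+2)^2)) :=
    Summable.mul_of_nonneg summable_geometric_two hc
      (fun i => by positivity) (fun j => by positivity)
  have h2sum : Summable (fun p : ℕ × ℕ => (1/2:ℝ)^p.2 * (1/((p.1:ℝ)+2)^2)) := by
    have := (Equiv.prodComm ℕ ℕ).summable_iff.mpr h1sum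
    exact this.congr fun p => rfl
  have hmaj : Summable (fun p : ℕ × ℕ =>
      (1/3:ℝ) * ((1/2:ℝ)^p.1 * (1/((p.2:ℝ)+2)^2) + (1/2:ℝ)^p.2 * (1/((p.1:ℝ)+2)^2))) :=
    (h1sum.add h2sum).mul_left _
  apply Summable.of_nonneg_of_le (fun p => abs_nonneg _) _ hmaj
  rintro ⟨i, j⟩
  have hb1 := rpow_prime_le i j
  have hb2 := rpow_prime_le j i
  have hq := QNC_abs_le (nthPrime i) (nthPrime j) (nthPrime_two_le i) (nthPrime_two_le j)
  calc |QNC (nthPrime i : ℝ) (nthPrime j : ℝ)|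
      ≤ (1/3) * ((nthPrime j : ℝ) ^ (-(nthPrime i:ℝ)) + (nthPrime i : ℝ) ^ (-(nthPrime j:ℝ))) := hq
    _ ≤ (1/3:ℝ) * ((1/2:ℝ)^i * (1/((j:ℝ)+2)^2) + (1/2:ℝ)^j * (1/((i:ℝ)+2)^2)) := by
        linarith
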